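/- Let α > 0 and let μ be the infinite product probability measure on ℕ → ℝ all of whose coordinates are independent exponential random variables of rate 1. Then: (i) for μ-almost every x, the series Σ_{k=0}^∞ e^{-αk}·x(k) converges; and (ii) for every real λ ≥ 0, ∫ exp(-λ·Σ_{k=0}^∞ e^{-αk}·x(k)) dμ(x) = ∏_{k=0}^∞ (1 + λ·e^{-αk})^{-1}, where the infinite product converges. -/

import Mathlib

open MeasureTheory ProbabilityTheory
open scoped ENNReal NNReal

open Real Set Filter Topology in
private lemma exp_laplace_aux {s : ℝ} (hs : 0 ≤ s) :
    ∫ t, Real.exp (-(s * t)) ∂(expMeasure 1) = (1 + s)⁻¹ := by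
  have hb : (0:ℝ) < 1 + s := by linarith
  have hmg : Measurable fun t : ℝ => ENNReal.ofReal (rexp (-(s * t))) :=
    (measurable_const.mul measurable_id).neg.exp.ennreal_ofReal
  have h1 : ∫ t, rexp (-(s * t)) ∂(expMeasure 1)
      = (∫⁻ t, ENNReal.ofReal (rexp (-(s * t))) ∂(expMeasure 1)).toReal :=
    integral_eq_lintegral_of_nonneg_ae (ae_of_all _ fun t => (exp_pos _).le)
      ((measurable_const.mul measurable_id).neg.exp.aestronglyMeasurable)
  have hpdf : Measurable (exponentialPDF 1) := (measurable_gammaPDFReal 1 1).ennreal_ofReal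
  have h2 : ∫⁻ t, ENNReal.ofReal (rexp (-(s * t))) ∂(expMeasure 1)
      = ∫⁻ t, (exponentialPDF 1 * fun t => ENNReal.ofReal (rexp (-(s * t)))) t ∂volume := by
    rw [expMeasure, gammaMeasure]
    exact lintegral_withDensity_eq_lintegral_mul volume hpdf hmg
  rw [h1, h2, ← lintegral_add_compl _ (measurableSet_Ioi (a := (0:ℝ)))]
  have hIic : ∫⁻ t in (Ioi (0:ℝ))ᶜ,
      (exponentialPDF 1 * fun t => ENNReal.ofReal (rexp (-(s * t)))) t ∂volume = 0 := by
    rw [compl_Ioi, ← Measure.restrict_congr_set Iio_ae_eq_Iic]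
    calc ∫⁻ t in Iio (0:ℝ), (exponentialPDF 1 * fun t => ENNReal.ofReal (rexp (-(s * t)))) t
        = ∫⁻ t in Iio (0:ℝ), (0:ℝ≥0∞) :=
          setLIntegral_congr_fun measurableSet_Iio
            (fun t (ht : t < 0) => by simp [exponentialPDF_of_neg ht])
      _ = 0 := lintegral_zero
  have hIoi : ∫⁻ t in Ioi (0:ℝ),
      (exponentialPDF 1 * fun t => ENNReal.ofReal (rexp (-(s * t)))) t ∂volume
      = ENNReal.ofReal (1 + s)⁻¹ := by
    rw [setLIntegral_congr_fun measurableSet_Ioi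
      ((fun t (ht : (0:ℝ) < t) => show _ = ENNReal.ofReal (rexp (-(1 + s) * t)) by
        simp only [Pi.mul_apply, exponentialPDF_of_nonneg ht.le, one_mul]
        rw [← ENNReal.ofReal_mul (exp_pos _).le, ← Real.exp_add]
        ring_nf))]
    rw [← ofReal_integral_eq_lintegral_ofReal (exp_neg_integrableOn_Ioi 0 hb)
      (ae_of_all _ fun t => (exp_pos _).le)]
    congr 1
    have := integral_comp_mul_left_Ioi (fun u => rexp (-u)) 0 hb
    simp only [mul_zero, neg_mul, smul_eq_mul] at this ⊢
    rw [this, integral_exp_neg_Ioi_zero, mul_one]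
  rw [hIic, hIoi, add_zero, ENNReal.toReal_ofReal (by positivity)]

open Real Set Filter Topology in
private lemma exp_moment_aux : ∫⁻ t, ENNReal.ofReal t ∂(expMeasure 1) < ⊤ := by
  have hpdf : Measurable (exponentialPDF 1) := (measurable_gammaPDFReal 1 1).ennreal_ofReal
  have h2 : ∫⁻ t, ENNReal.ofReal t ∂(expMeasure 1)
      = ∫⁻ t, (exponentialPDF 1 * fun t => ENNReal.ofReal t) t ∂volume := by
    rw [expMeasure, gammaMeasure]
    exact lintegral_withDensity_eq_lintegral_mul volume hpdf ENNReal.measurable_ofReal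
  rw [h2, ← lintegral_add_compl _ (measurableSet_Ioi (a := (0:ℝ)))]
  have hIic : ∫⁻ t in (Ioi (0:ℝ))ᶜ,
      (exponentialPDF 1 * fun t => ENNReal.ofReal t) t ∂volume = 0 := by
    rw [compl_Ioi, ← Measure.restrict_congr_set Iio_ae_eq_Iic]
    calc ∫⁻ t in Iio (0:ℝ), (exponentialPDF 1 * fun t => ENNReal.ofReal t) t
        = ∫⁻ t in Iio (0:ℝ), (0:ℝ≥0∞) :=
          setLIntegral_congr_fun measurableSet_Iio
            (fun t (ht : t < 0) => by simp [exponentialPDF_of_neg ht])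
      _ = 0 := lintegral_zero
  have hIoi : ∫⁻ t in Ioi (0:ℝ),
      (exponentialPDF 1 * fun t => ENNReal.ofReal t) t ∂volume
      = ENNReal.ofReal (∫ t in Ioi (0:ℝ), rexp (-t) * t ^ ((2:ℝ) - 1)) := by
    rw [setLIntegral_congr_fun measurableSet_Ioi
      ((fun t (ht : (0:ℝ) < t) =>
        show _ = ENNReal.ofReal (rexp (-t) * t ^ ((2:ℝ) - 1)) by
        simp only [Pi.mul_apply, exponentialPDF_of_nonneg ht.le, one_mul]
        rw [← ENNReal.ofReal_mul (exp_pos _).le]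
        norm_num))]
    rw [← ofReal_integral_eq_lintegral_ofReal (Real.GammaIntegral_convergent (by norm_num))]
    filter_upwards [ae_restrict_mem measurableSet_Ioi] with t ht
    have ht' : (0:ℝ) < t := ht
    positivity
  rw [hIic, hIoi, add_zero]
  exact ENNReal.ofReal_lt_top

open Filter Topology

theorem stmt_7 (α : ℝ) (hα : 0 < α) (μ : Measure (ℕ → ℝ)) [IsProbabilityMeasure μ]
    (hindep : iIndepFun (m := fun _ : ℕ => (inferInstance : MeasurableSpace ℝ))
      (fun (k : ℕ) (x : ℕ → ℝ) => x k) μ)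
    (hlaw : ∀ k : ℕ, μ.map (fun x : ℕ → ℝ => x k) = expMeasure 1) :
    (∀ᵐ x ∂μ, Summable fun k : ℕ => Real.exp (-α * k) * x k) ∧
    ∀ lam : ℝ, 0 ≤ lam →
      Multipliable (fun k : ℕ => (1 + lam * Real.exp (-α * k))⁻¹) ∧
      ∫ x, Real.exp (-lam * ∑' k : ℕ, Real.exp (-α * k) * x k) ∂μ
        = ∏' k : ℕ, (1 + lam * Real.exp (-α * k))⁻¹ := by
  set c : ℕ → ℝ := fun k : ℕ => Real.exp (-α * k) with hc
  have hcpos : ∀ k, 0 < c k := fun k => Real.exp_pos _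
  have hmeas_eval : ∀ k : ℕ, Measurable fun x : ℕ → ℝ => x k := fun k => measurable_pi_apply k
  have hcsum : Summable c := by
    have h : Summable fun k : ℕ => Real.exp (-α) ^ k :=
      summable_geometric_of_lt_one (Real.exp_pos _).le (Real.exp_lt_one_iff.mpr (by linarith))
    refine h.congr fun k => ?_
    rw [← Real.exp_nat_mul, hc]
    ring_nf
  -- a.e. nonnegativity of all coordinates
  have hnn : ∀ᵐ x ∂μ, ∀ k, 0 ≤ x k := by
    rw [MeasureTheory.ae_all_iff]
    intro k
    have h0 : (expMeasure 1) (Set.Iio 0) = 0 := by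
      rw [expMeasure, gammaMeasure, withDensity_apply _ measurableSet_Iio]
      exact lintegral_gammaPDF_of_nonpos le_rfl
    have hk : μ {x : ℕ → ℝ | x k < 0} = 0 := by
      have : μ ((fun x : ℕ → ℝ => x k) ⁻¹' Set.Iio 0) = 0 := by
        rw [← Measure.map_apply (hmeas_eval k) measurableSet_Iio, hlaw k]
        exact h0
      exact this
    rw [ae_iff]
    simpa using hk
  -- a.e. summability
  have hsum_ae : ∀ᵐ x ∂μ, Summable fun k => c k * x k := by
    have hcoord : ∀ k : ℕ, ∫⁻ x, ENNReal.ofReal (x k) ∂μ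
        = ∫⁻ t, ENNReal.ofReal t ∂(expMeasure 1) := by
      intro k
      rw [← hlaw k, lintegral_map ENNReal.measurable_ofReal (hmeas_eval k)]
    have hterm_meas : ∀ k : ℕ, Measurable fun x : ℕ → ℝ => ENNReal.ofReal (c k * x k) :=
      fun k => ((hmeas_eval k).const_mul (c k)).ennreal_ofReal
    have htotal : ∫⁻ x, (∑' k, ENNReal.ofReal (c k * x k)) ∂μ ≠ ⊤ := by
      rw [lintegral_tsum fun k => (hterm_meas k).aemeasurable]
      have heach : ∀ k : ℕ, ∫⁻ x, ENNReal.ofReal (c k * x k) ∂μ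
          = ENNReal.ofReal (c k) * ∫⁻ t, ENNReal.ofReal t ∂(expMeasure 1) := by
        intro k
        have hlc := lintegral_const_mul (μ := μ) (ENNReal.ofReal (c k))
          (f := fun x : ℕ → ℝ => ENNReal.ofReal (x k))
          (ENNReal.measurable_ofReal.comp (hmeas_eval k))
        rw [← hcoord k, ← hlc]
        congr 1
        ext x
        exact ENNReal.ofReal_mul (hcpos k).le
      rw [tsum_congr heach, ENNReal.tsum_mul_right]
      exact (ENNReal.mul_lt_top
        (lt_of_le_of_lt (le_of_eq (ENNReal.ofReal_tsum_of_nonneg (fun k => (hcpos k).le) hcsum).symm)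
          ENNReal.ofReal_lt_top) exp_moment_aux).ne
    have hae := ae_lt_top' (AEMeasurable.ennreal_tsum fun k => (hterm_meas k).aemeasurable) htotal
    filter_upwards [hae, hnn] with x hx hxnn
    have h := ENNReal.summable_toReal hx.ne
    refine h.congr fun k => ?_
    exact ENNReal.toReal_ofReal (mul_nonneg (hcpos k).le (hxnn k))
  refine ⟨hsum_ae, fun lam hlam => ?_⟩
  have hpos : ∀ k, (0:ℝ) < 1 + lam * c k :=
    fun k => by have := mul_nonneg hlam (hcpos k).le; linarith
  set p : ℕ → ℝ := fun k => (1 + lam * c k)⁻¹ with hp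
  -- multipliability
  have hlog : Summable fun k => Real.log (p k) := by
    have h1 : Summable fun k => Real.log (1 + lam * c k) := by
      refine Summable.of_nonneg_of_le
        (fun k => Real.log_nonneg (by have := mul_nonneg hlam (hcpos k).le; linarith))
        (fun k => ?_) (hcsum.mul_left lam)
      have := Real.log_le_sub_one_of_pos (hpos k)
      linarith
    simpa [hp, Real.log_inv] using h1.neg
  have hmul : Multipliable p :=
    Real.multipliable_of_summable_log (fun k => inv_pos.mpr (hpos k)) hlog
  refine ⟨hmul, ?_⟩
  -- integrals of partial sums
  set Y : ℕ → (ℕ → ℝ) → ℝ := fun k x => c k * x k with hY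
  have hYmeas : ∀ k, Measurable (Y k) := fun k => (hmeas_eval k).const_mul (c k)
  have hYindep : iIndepFun (m := fun _ : ℕ => (inferInstance : MeasurableSpace ℝ)) Y μ :=
    hindep.comp (fun k t => c k * t) (fun k => measurable_id.const_mul (c k))
  have hmgf_single : ∀ k, mgf (Y k) μ (-lam) = p k := by
    intro k
    have h1 : mgf (Y k) μ (-lam) = ∫ t, Real.exp (-(lam * c k) * t) ∂(μ.map fun x : ℕ → ℝ => x k) := by
      have hm : AEStronglyMeasurable (fun t : ℝ => Real.exp (-(lam * c k) * t))
          (μ.map fun x : ℕ → ℝ => x k) :=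
        ((measurable_id.const_mul _).exp).aestronglyMeasurable
      rw [mgf, integral_map (hmeas_eval k).aemeasurable hm]
      congr 1
      ext x
      rw [hY]
      ring_nf
    rw [h1, hlaw k]
    have h2 : ∀ t : ℝ, Real.exp (-(lam * c k) * t) = Real.exp (-(lam * c k * t)) := by
      intro t; rw [neg_mul]
    simp_rw [h2]
    rw [exp_laplace_aux (mul_nonneg hlam (hcpos k).le)]
  have hint_n : ∀ n : ℕ, ∫ x, Real.exp (-lam * ∑ k ∈ Finset.range n, c k * x k) ∂μ
      = ∏ k ∈ Finset.range n, p k := by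
    intro n
    have h := hYindep.mgf_sum hYmeas (Finset.range n) (t := -lam)
    simp_rw [hmgf_single] at h
    rw [← h, mgf]
    congr 1
    ext x
    congr 1
    rw [Finset.sum_apply]
  -- dominated convergence
  have hconv : Tendsto (fun n => ∫ x, Real.exp (-lam * ∑ k ∈ Finset.range n, c k * x k) ∂μ)
      atTop (𝓝 (∫ x, Real.exp (-lam * ∑' k, c k * x k) ∂μ)) := by
    refine tendsto_integral_of_dominated_convergence (fun _ => (1:ℝ))
      (fun n => ?_) (integrable_const 1) (fun n => ?_) ?_
    · exact ((Finset.measurable_sum (Finset.range n) fun k _ => hYmeas k).const_mul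
        (-lam)).exp.aestronglyMeasurable
    · filter_upwards [hnn] with x hx
      rw [Real.norm_eq_abs, abs_of_pos (Real.exp_pos _)]
      refine Real.exp_le_one_iff.mpr ?_
      refine mul_nonpos_of_nonpos_of_nonneg (by linarith) ?_
      exact Finset.sum_nonneg fun k _ => mul_nonneg (hcpos k).le (hx k)
    · filter_upwards [hsum_ae] with x hx
      exact (Real.continuous_exp.tendsto _).comp
        (hx.hasSum.tendsto_sum_nat.const_mul (-lam))
  have hprod : Tendsto (fun n => ∏ k ∈ Finset.range n, p k) atTop (𝓝 (∏' k, p k)) :=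
    hmul.hasProd.tendsto_prod_nat
  have := hconv
  simp_rw [hint_n] at this
  exact tendsto_nhds_unique this hprod
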